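/- arXiv:1508.04404 — 3 statements merged into one kernel-verified Lean document; each statement's English description precedes it below -/
import Mathlib

section
/- Let G = N ⋊ H be a semidirect product of groups, and identify N and H with subgroups of G. Let K₁ be the normal subgroup of G ⊗ G generated by all elements g ⊗ n and n ⊗ g with g ∈ G, n ∈ N. Then the sequence 1 → K₁ → G ⊗ G → H ⊗ H → 1, where the right-hand map is induced by the projection p : G → H, is exact and splits on the right via the map induced by the inclusion H → G; consequently G ⊗ G ≅ K₁ ⋊ (H ⊗ H). -/
/- Nonabelian tensor square framework (Brown–Loday). -/

namespace NATensor

variable (G : Type*) [Group G]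

/-- The relator set for the nonabelian tensor square of `G`:
`g g' ⊗ h = (ᵍg' ⊗ ᵍh)(g ⊗ h)` and `g ⊗ h h' = (g ⊗ h)(ʰg ⊗ ʰh')`. -/
def rels : Set (FreeGroup (G × G)) :=
  {r | (∃ g g' h : G,
          r = FreeGroup.of (g * g', h) *
              (FreeGroup.of (g * g' * g⁻¹, g * h * g⁻¹) * FreeGroup.of (g, h))⁻¹) ∨
       (∃ g h h' : G,
          r = FreeGroup.of (g, h * h') *
              (FreeGroup.of (g, h) * FreeGroup.of (h * g * h⁻¹, h * h' * h⁻¹))⁻¹)}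

/-- The nonabelian tensor square `G ⊗ G`. -/
abbrev TS := PresentedGroup (rels G)

variable {G}

/-- The generator `g ⊗ h` of the nonabelian tensor square. -/
def tmul (g h : G) : TS G := PresentedGroup.of (g, h)

lemma mk_rel_eq_one {r : FreeGroup (G × G)} (hr : r ∈ rels G) :
    (PresentedGroup.mk (rels G) r : TS G) = 1 :=
  (QuotientGroup.eq_one_iff r).mpr (Subgroup.subset_normalClosure hr)

lemma tmul_rel₁ (g g' h : G) :
    tmul (g * g') h = tmul (g * g' * g⁻¹) (g * h * g⁻¹) * tmul g h := by
  have h1 := mk_rel_eq_one (G := G) (Or.inl ⟨g, g', h, rfl⟩)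
  simp only [map_mul, map_inv, mul_inv_eq_one] at h1
  exact h1

lemma tmul_rel₂ (g h h' : G) :
    tmul g (h * h') = tmul g h * tmul (h * g * h⁻¹) (h * h' * h⁻¹) := by
  have h1 := mk_rel_eq_one (G := G) (Or.inr ⟨g, h, h', rfl⟩)
  simp only [map_mul, map_inv, mul_inv_eq_one] at h1
  exact h1

variable (G)

/-- The homomorphism `κ : G ⊗ G → G`, `g ⊗ h ↦ [g,h] = g h g⁻¹ h⁻¹` (its image is `[G,G]`). -/
def kappa : TS G →* G :=
  PresentedGroup.toGroup (f := fun x : G × G => x.1 * x.2 * x.1⁻¹ * x.2⁻¹) (by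
    rintro r (⟨g, g', h, rfl⟩ | ⟨g, h, h', rfl⟩) <;>
      simp only [map_mul, map_inv, FreeGroup.lift_apply_of] <;> group)

variable {G}

@[simp] lemma kappa_tmul (g h : G) : kappa G (tmul g h) = g * h * g⁻¹ * h⁻¹ :=
  PresentedGroup.toGroup.of _

variable (G)

/-- `J(G) = ker κ ≅ π₃(SK(G,1))`. -/
def J : Subgroup (TS G) := (kappa G).ker

/-- `∇(G)`: the (normal) subgroup of `G ⊗ G` generated by the elements `x ⊗ x`. -/
def nabla : Subgroup (TS G) :=
  Subgroup.normalClosure {t | ∃ x : G, t = tmul x x}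

/-- `Δ(G)`: the (normal) subgroup of `G ⊗ G` generated by the `(x ⊗ y)(y ⊗ x)`. -/
def delta : Subgroup (TS G) :=
  Subgroup.normalClosure {t | ∃ x y : G, t = tmul x y * tmul y x}

instance : (nabla G).Normal := Subgroup.normalClosure_normal

instance : (delta G).Normal := Subgroup.normalClosure_normal

/-- The exterior square `G ∧ G = (G ⊗ G)/∇(G)`. -/
abbrev ES := TS G ⧸ nabla G

/-- The symmetric square `G ⊗̃ G = (G ⊗ G)/Δ(G)`. -/
abbrev SS := TS G ⧸ delta G

variable {G}

/-- The element `g ∧ h` of the exterior square. -/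
def emul (g h : G) : ES G := QuotientGroup.mk' (nabla G) (tmul g h)

/-- The image of `g ⊗ h` in the symmetric square. -/
def smul (g h : G) : SS G := QuotientGroup.mk' (delta G) (tmul g h)

variable {H : Type*} [Group H]

/-- The induced homomorphism `G ⊗ G → H ⊗ H` of a homomorphism `f : G → H`. -/
def tmap (f : G →* H) : TS G →* TS H :=
  PresentedGroup.toGroup (f := fun x : G × G => tmul (f x.1) (f x.2)) (by
    rintro r (⟨g, g', h, rfl⟩ | ⟨g, h, h', rfl⟩) <;>
      simp only [map_mul, map_inv, FreeGroup.lift_apply_of, mul_inv_eq_one]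
    · rw [tmul_rel₁]
    · rw [tmul_rel₂])

@[simp] lemma tmap_tmul (f : G →* H) (g h : G) :
    tmap f (tmul g h) = tmul (f g) (f h) :=
  PresentedGroup.toGroup.of _

lemma nabla_le_comap_nabla (f : G →* H) :
    nabla G ≤ MonoidHom.ker ((QuotientGroup.mk' (nabla H)).comp (tmap f)) := by
  refine Subgroup.normalClosure_le_normal ?_
  rintro _ ⟨y, rfl⟩
  simp only [SetLike.mem_coe, MonoidHom.mem_ker, MonoidHom.comp_apply, tmap_tmul,
    QuotientGroup.mk'_apply, QuotientGroup.eq_one_iff]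
  exact Subgroup.subset_normalClosure ⟨f y, rfl⟩

lemma delta_le_comap_delta (f : G →* H) :
    delta G ≤ MonoidHom.ker ((QuotientGroup.mk' (delta H)).comp (tmap f)) := by
  refine Subgroup.normalClosure_le_normal ?_
  rintro _ ⟨x, y, rfl⟩
  simp only [SetLike.mem_coe, MonoidHom.mem_ker, MonoidHom.comp_apply, map_mul, tmap_tmul,
    QuotientGroup.mk'_apply, ← QuotientGroup.mk_mul, QuotientGroup.eq_one_iff]
  exact Subgroup.subset_normalClosure ⟨f x, f y, rfl⟩

/-- The induced homomorphism `G ∧ G → H ∧ H` of a homomorphism `f : G → H`. -/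
def emap (f : G →* H) : ES G →* ES H :=
  QuotientGroup.lift (nabla G) ((QuotientGroup.mk' (nabla H)).comp (tmap f))
    (fun x hx => MonoidHom.mem_ker.mp (nabla_le_comap_nabla f hx))

@[simp] lemma emap_emul (f : G →* H) (g h : G) :
    emap f (emul g h) = emul (f g) (f h) := by
  simp [emap, emul, QuotientGroup.mk'_apply, QuotientGroup.lift_mk']
  exact congrArg (QuotientGroup.mk' (nabla H)) (tmap_tmul f g h)

/-- The induced homomorphism `G ⊗̃ G → H ⊗̃ H` of a homomorphism `f : G → H`. -/
def smap (f : G →* H) : SS G →* SS H :=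
  QuotientGroup.lift (delta G) ((QuotientGroup.mk' (delta H)).comp (tmap f))
    (fun x hx => MonoidHom.mem_ker.mp (delta_le_comap_delta f hx))

variable (G)

lemma nabla_le_ker_kappa : nabla G ≤ (kappa G).ker := by
  refine Subgroup.normalClosure_le_normal ?_
  rintro _ ⟨x, rfl⟩
  simp only [SetLike.mem_coe, MonoidHom.mem_ker, kappa_tmul]
  group

/-- The homomorphism `κ' : G ∧ G → G`, `g ∧ h ↦ [g,h]` (its image is `[G,G]`). -/
def kappa' : ES G →* G :=
  QuotientGroup.lift (nabla G) (kappa G)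
    (fun x hx => MonoidHom.mem_ker.mp (nabla_le_ker_kappa G hx))

/-- The Schur multiplier `M(G) = ker κ' ≅ H₂(G)`. -/
def M : Subgroup (ES G) := (kappa' G).ker

/-- `J̃(G) = J(G)/Δ(G) ≅ π₂ˢ(K(G,1))`, realized as the image of `J(G)` in `G ⊗̃ G`. -/
def Jt : Subgroup (SS G) := Subgroup.map (QuotientGroup.mk' (delta G)) (J G)

/-- `∇(G)/Δ(G)`, realized as the image of `∇(G)` in `G ⊗̃ G`. -/
def nablaBar : Subgroup (SS G) := Subgroup.map (QuotientGroup.mk' (delta G)) (nabla G)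

end NATensor

namespace NATensor
variable {G : Type*} [Group G]

lemma tmul_one' (g : G) : tmul g (1 : G) = 1 := by
  have h := tmul_rel₂ g (1 : G) (1 : G)
  simp only [mul_one, one_mul, inv_one] at h
  exact (left_eq_mul.mp h)

lemma one_tmul' (h : G) : tmul (1 : G) h = 1 := by
  have h1 := tmul_rel₁ (1 : G) (1 : G) h
  simp only [mul_one, one_mul, inv_one] at h1
  exact (left_eq_mul.mp h1)

end NATensor

open NATensor

/-- `K₁`: the normal subgroup of `G ⊗ G` (for `G = N ⋊ H`) generated by the elements
`g ⊗ n` and `n ⊗ g` with `g ∈ G`, `n ∈ N`. -/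
def K₁ (N H : Type*) [Group N] [Group H] (φ : H →* MulAut N) : Subgroup (TS (N ⋊[φ] H)) :=
  Subgroup.normalClosure
    {t | ∃ (g : N ⋊[φ] H) (n : N),
      t = tmul g (SemidirectProduct.inl n) ∨ t = tmul (SemidirectProduct.inl n) g}


instance K₁_normal (N H : Type*) [Group N] [Group H] (φ : H →* MulAut N) :
    (K₁ N H φ).Normal := Subgroup.normalClosure_normal

section Aux

variable {N H : Type*} [Group N] [Group H] (φ : H →* MulAut N)

open SemidirectProduct

lemma q_tmul_inl_left (n : N) (b : N ⋊[φ] H) :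
    (QuotientGroup.mk' (K₁ N H φ)) (tmul (SemidirectProduct.inl n) b) = 1 := by
  rw [QuotientGroup.mk'_apply, QuotientGroup.eq_one_iff]
  exact Subgroup.subset_normalClosure ⟨b, n, Or.inr rfl⟩

lemma q_tmul_inl_right (a : N ⋊[φ] H) (n : N) :
    (QuotientGroup.mk' (K₁ N H φ)) (tmul a (SemidirectProduct.inl n)) = 1 := by
  rw [QuotientGroup.mk'_apply, QuotientGroup.eq_one_iff]
  exact Subgroup.subset_normalClosure ⟨a, n, Or.inl rfl⟩

lemma q_tmul_inl_mul_left (n : N) (a b : N ⋊[φ] H) :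
    (QuotientGroup.mk' (K₁ N H φ)) (tmul (SemidirectProduct.inl n * a) b) =
      (QuotientGroup.mk' (K₁ N H φ)) (tmul a b) := by
  have hc2 : SemidirectProduct.inl n * a = a * (a⁻¹ * SemidirectProduct.inl n * a) := by group
  have hrel := tmul_rel₁ a (a⁻¹ * SemidirectProduct.inl n * a) b
  have hconj : a * (a⁻¹ * SemidirectProduct.inl n * a) * a⁻¹ = SemidirectProduct.inl n := by
    group
  rw [hc2, hrel, hconj, map_mul, q_tmul_inl_left, one_mul]

lemma q_tmul_inl_mul_right (a : N ⋊[φ] H) (n : N) (b : N ⋊[φ] H) :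
    (QuotientGroup.mk' (K₁ N H φ)) (tmul a (SemidirectProduct.inl n * b)) =
      (QuotientGroup.mk' (K₁ N H φ)) (tmul a b) := by
  have hc2 : SemidirectProduct.inl n * b = b * (b⁻¹ * SemidirectProduct.inl n * b) := by group
  have hrel := tmul_rel₂ a b (b⁻¹ * SemidirectProduct.inl n * b)
  have hconj : b * (b⁻¹ * SemidirectProduct.inl n * b) * b⁻¹ = SemidirectProduct.inl n := by
    group
  rw [hc2, hrel, hconj, map_mul, q_tmul_inl_right, mul_one]

lemma q_comp :
    (QuotientGroup.mk' (K₁ N H φ)).comp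
      ((tmap (SemidirectProduct.inr : H →* N ⋊[φ] H)).comp
        (tmap (SemidirectProduct.rightHom : N ⋊[φ] H →* H))) =
    QuotientGroup.mk' (K₁ N H φ) := by
  apply PresentedGroup.ext
  rintro ⟨g, g'⟩
  show (QuotientGroup.mk' (K₁ N H φ))
      ((tmap SemidirectProduct.inr) ((tmap SemidirectProduct.rightHom) (tmul g g'))) =
    (QuotientGroup.mk' (K₁ N H φ)) (tmul g g')
  rw [tmap_tmul, tmap_tmul]
  conv_rhs => rw [← SemidirectProduct.inl_left_mul_inr_right g,
    ← SemidirectProduct.inl_left_mul_inr_right g']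
  rw [q_tmul_inl_mul_left, q_tmul_inl_mul_right]
  rfl

end Aux

/-- for `G = N ⋊ H`, the sequence `1 → K₁ → G ⊗ G → H ⊗ H → 1`
(right map induced by the projection `p : G → H`) is exact and splits on the right via the
map induced by the inclusion `H → G`; consequently `G ⊗ G ≅ K₁ ⋊ (H ⊗ H)`. -/
theorem tensor_square_of_semidirect_product
    (N H : Type*) [Group N] [Group H] (φ : H →* MulAut N) :
    Function.Surjective (tmap (SemidirectProduct.rightHom : N ⋊[φ] H →* H)) ∧
    MonoidHom.ker (tmap (SemidirectProduct.rightHom : N ⋊[φ] H →* H)) = K₁ N H φ ∧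
    (tmap (SemidirectProduct.rightHom : N ⋊[φ] H →* H)).comp
        (tmap (SemidirectProduct.inr : H →* N ⋊[φ] H)) = MonoidHom.id (TS H) ∧
    ∃ ψ : TS H →* MulAut ↥(K₁ N H φ),
      Nonempty (TS (N ⋊[φ] H) ≃* ↥(K₁ N H φ) ⋊[ψ] TS H) := by
  set p := tmap (SemidirectProduct.rightHom : N ⋊[φ] H →* H) with hp
  set s := tmap (SemidirectProduct.inr : H →* N ⋊[φ] H) with hs
  have hps : p.comp s = MonoidHom.id (TS H) := by
    apply PresentedGroup.ext
    rintro ⟨h, h'⟩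
    show p (s (tmul h h')) = tmul h h'
    rw [hs, hp, tmap_tmul, tmap_tmul, SemidirectProduct.rightHom_inr,
      SemidirectProduct.rightHom_inr]
  have hps' : ∀ t, p (s t) = t := fun t => DFunLike.congr_fun hps t
  have hsurj : Function.Surjective p := fun t => ⟨s t, hps' t⟩
  have hker_ge : K₁ N H φ ≤ p.ker := by
    apply Subgroup.normalClosure_le_normal
    rintro _ ⟨g, n, (rfl | rfl)⟩ <;>
      simp only [SetLike.mem_coe, MonoidHom.mem_ker, hp, tmap_tmul,
        SemidirectProduct.rightHom_inl, tmul_one', one_tmul']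
  have hker : p.ker = K₁ N H φ := by
    refine le_antisymm ?_ hker_ge
    intro t ht
    have h1 : QuotientGroup.mk' (K₁ N H φ) t = 1 := by
      rw [← q_comp φ]
      simp only [MonoidHom.comp_apply, ← hp, ← hs, MonoidHom.mem_ker.mp ht, map_one]
    rwa [QuotientGroup.mk'_apply, QuotientGroup.eq_one_iff] at h1
  refine ⟨hsurj, hker, hps, ?_⟩
  refine ⟨MulAut.conjNormal.comp s, ⟨?_⟩⟩
  set f := SemidirectProduct.lift (φ := MulAut.conjNormal.comp s) (K₁ N H φ).subtype s
    (fun t => by ext k; simp) with hf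
  have hfapp : ∀ x : ↥(K₁ N H φ) ⋊[MulAut.conjNormal.comp s] TS H,
      f x = (x.left : TS (N ⋊[φ] H)) * s x.right := fun x => rfl
  have finj : Function.Injective f := by
    rw [injective_iff_map_eq_one]
    rintro ⟨k, t⟩ hx
    rw [hfapp] at hx
    have hk1 : p (k : TS (N ⋊[φ] H)) = 1 := MonoidHom.mem_ker.mp (hker_ge k.2)
    have ht : t = 1 := by
      have h2 := congrArg p hx
      rw [map_mul, map_one, hk1, one_mul, hps'] at h2
      exact h2
    have hk : (k : TS (N ⋊[φ] H)) = 1 := by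
      rw [ht, map_one, mul_one] at hx
      exact hx
    ext
    · exact hk
    · exact ht
  have fsurj : Function.Surjective f := by
    intro g
    refine ⟨⟨⟨g * (s (p g))⁻¹, ?_⟩, p g⟩, ?_⟩
    · rw [← hker]
      simp only [MonoidHom.mem_ker, map_mul, map_inv, hps', mul_inv_cancel]
    · rw [hfapp]
      simp only [mul_inv_cancel_right]
      group
  exact (MulEquiv.ofBijective f ⟨finj, fsurj⟩).symm
end

section
/- Let G = N ⋊ H be a semidirect product of groups, and identify N and H with subgroups of G. Let K₃ be the subgroup of ∇(G) generated by the elements (g ⊗ n)(n ⊗ g) and n₁ ⊗ n₁ for g ∈ G and n, n₁ ∈ N. Then ∇(G) ≅ K₃ × ∇(H), via the exact sequence 1 → K₃ → ∇(G) → ∇(H) → 1 induced by the projection p : G → H, which splits via the map induced by the inclusion H → G. -/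
namespace NATensor

variable {G : Type*} [Group G]

lemma tmul_comm_aux (g h x y : G) :
    tmul ((g*h)*x*(g*h)⁻¹) ((g*h)*y*(g*h)⁻¹) * tmul g h =
      tmul g h * tmul ((h*g)*x*(h*g)⁻¹) ((h*g)*y*(h*g)⁻¹) := by
  have e1 := tmul_rel₁ g x (h*y)
  have e2 := tmul_rel₂ g h y
  have e3 := tmul_rel₂ (g*x) h y
  have e4 := tmul_rel₁ g x h
  have e5 := tmul_rel₂ (g*x*g⁻¹) (g*h*g⁻¹) (g*y*g⁻¹)
  have e6 := tmul_rel₁ (h*g*h⁻¹) (h*x*h⁻¹) (h*y*h⁻¹)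
  rw [show g*(h*y)*g⁻¹ = (g*h*g⁻¹)*(g*y*g⁻¹) by group] at e1
  rw [show (g*h*g⁻¹)*(g*x*g⁻¹)*(g*h*g⁻¹)⁻¹ = (g*h)*x*(g*h)⁻¹ by group,
      show (g*h*g⁻¹)*(g*y*g⁻¹)*(g*h*g⁻¹)⁻¹ = (g*h)*y*(g*h)⁻¹ by group] at e5
  rw [show h*(g*x)*h⁻¹ = (h*g*h⁻¹)*(h*x*h⁻¹) by group] at e3
  rw [show (h*g*h⁻¹)*(h*x*h⁻¹)*(h*g*h⁻¹)⁻¹ = (h*g)*x*(h*g)⁻¹ by group,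
      show (h*g*h⁻¹)*(h*y*h⁻¹)*(h*g*h⁻¹)⁻¹ = (h*g)*y*(h*g)⁻¹ by group] at e6
  rw [e5, e2] at e1
  rw [e4, e6] at e3
  -- e1 : tmul (g*x) (h*y) = T1 * T2gh * (tmul g h * T3)
  -- e3 : tmul (g*x) (h*y) = T1 * tmul g h * (T2hg * T3)
  have := e1.symm.trans e3
  simp only [mul_assoc] at this
  have := mul_left_cancel this
  simp only [← mul_assoc] at this
  exact mul_right_cancel this

lemma tmul_diag_comm (x g h : G) : tmul x x * tmul g h = tmul g h * tmul x x := by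
  have h1 := tmul_comm_aux x x ((x*x)⁻¹*g*(x*x)) ((x*x)⁻¹*h*(x*x))
  rw [show (x*x)*((x*x)⁻¹*g*(x*x))*(x*x)⁻¹ = g by group,
      show (x*x)*((x*x)⁻¹*h*(x*x))*(x*x)⁻¹ = h by group] at h1
  exact h1.symm

lemma tmul_diag_commute (x : G) (t : TS G) : tmul x x * t = t * tmul x x := by
  have ht : t ∈ Subgroup.centralizer {tmul x x} := by
    refine PresentedGroup.generated_by _ _ ?_ t
    rintro ⟨a, b⟩
    rw [Subgroup.mem_centralizer_iff]
    rintro z rfl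
    exact tmul_diag_comm x a b
  exact Subgroup.mem_centralizer_iff.mp ht (tmul x x) rfl

lemma diag_mem_nabla (x : G) : tmul x x ∈ nabla G :=
  Subgroup.subset_normalClosure ⟨x, rfl⟩

lemma nabla_le_center' : nabla G ≤ Subgroup.center (TS G) := by
  apply Subgroup.normalClosure_le_normal
  rintro _ ⟨x, rfl⟩
  exact Subgroup.mem_center_iff.2 fun z => (tmul_diag_commute x z).symm

lemma nabla_commute {t : TS G} (ht : t ∈ nabla G) (z : TS G) : t * z = z * t :=
  (Subgroup.mem_center_iff.1 (nabla_le_center' ht) z).symm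

lemma nabla_eq_closure : nabla G = Subgroup.closure {t : TS G | ∃ x, t = tmul x x} := by
  have hle : Subgroup.closure {t : TS G | ∃ x, t = tmul x x} ≤ Subgroup.center (TS G) :=
    (Subgroup.closure_le _).2 (by
      rintro _ ⟨x, rfl⟩
      exact Subgroup.mem_center_iff.2 fun z => (tmul_diag_commute x z).symm)
  haveI : (Subgroup.closure {t : TS G | ∃ x, t = tmul x x}).Normal := by
    constructor
    intro n hn g
    have h := Subgroup.mem_center_iff.1 (hle hn) g
    rwa [h, mul_inv_cancel_right]
  exact le_antisymm (Subgroup.normalClosure_le_normal Subgroup.subset_closure)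
    ((Subgroup.closure_le _).2 Subgroup.subset_normalClosure)

lemma diag_mul (x y : G) :
    tmul (x*y) (x*y) =
      tmul (x*y*x⁻¹) x * tmul x (x*y*x⁻¹) *
        tmul (x*(x*y*x⁻¹)*x⁻¹) (x*(x*y*x⁻¹)*x⁻¹) * tmul x x := by
  have h1 := tmul_rel₁ x y (x*y)
  have h2 := tmul_rel₂ x x y
  have h3 := tmul_rel₂ (x*y*x⁻¹) x (x*y*x⁻¹)
  rw [show x*(x*y)*x⁻¹ = x*(x*y*x⁻¹) by group] at h1
  rw [show x*x*x⁻¹ = x by group] at h2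
  rw [h3, h2] at h1
  rw [h1]
  -- goal : A*B*(X*P) = A*P*B*X
  rw [tmul_diag_comm x x (x*y*x⁻¹)]
  -- A*B*(P*X) = A*P*B*X
  rw [show tmul (x*y*x⁻¹) x * tmul (x*(x*y*x⁻¹)*x⁻¹) (x*(x*y*x⁻¹)*x⁻¹) *
        (tmul x (x*y*x⁻¹) * tmul x x) =
      tmul (x*y*x⁻¹) x * (tmul (x*(x*y*x⁻¹)*x⁻¹) (x*(x*y*x⁻¹)*x⁻¹) *
        tmul x (x*y*x⁻¹)) * tmul x x by simp only [mul_assoc]]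
  rw [tmul_diag_comm (x*(x*y*x⁻¹)*x⁻¹) x (x*y*x⁻¹)]
  simp only [mul_assoc]

lemma cross_mem_nabla (u v : G) : tmul u v * tmul v u ∈ nabla G := by
  have h := diag_mul v (v⁻¹*u*v)
  rw [show v*(v⁻¹*u*v)*v⁻¹ = u by group] at h
  rw [show v*(v⁻¹*u*v) = u*v by group] at h
  -- h : tmul (u*v) (u*v) = tmul u v * tmul v u * tmul (v*u*v⁻¹) (v*u*v⁻¹) * tmul v v
  have h2 : tmul u v * tmul v u =
      tmul (u*v) (u*v) * (tmul v v)⁻¹ * (tmul (v*u*v⁻¹) (v*u*v⁻¹))⁻¹ := by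
    rw [h]; group
  rw [h2]
  exact mul_mem (mul_mem (diag_mem_nabla _) (inv_mem (diag_mem_nabla _)))
    (inv_mem (diag_mem_nabla _))

lemma cross_comm (u v : G) : tmul u v * tmul v u = tmul v u * tmul u v := by
  have h := nabla_commute (cross_mem_nabla u v) (tmul v u)
  -- (u⊗v * v⊗u) * v⊗u = v⊗u * (u⊗v * v⊗u)
  have h' : tmul u v * tmul v u * tmul v u = tmul v u * tmul u v * tmul v u := by
    rw [h]; simp only [mul_assoc]
  exact mul_right_cancel h'

end NATensor

open NATensor

/-- `K₃`: the subgroup of `∇(G)` (for `G = N ⋊ H`) generated by the elements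
`(g ⊗ n)(n ⊗ g)` and `n₁ ⊗ n₁` with `g ∈ G`, `n, n₁ ∈ N`. -/
def K₃ (N H : Type*) [Group N] [Group H] (φ : H →* MulAut N) : Subgroup (TS (N ⋊[φ] H)) :=
  Subgroup.closure
    {t | (∃ (g : N ⋊[φ] H) (n : N),
            t = tmul g (SemidirectProduct.inl n) * tmul (SemidirectProduct.inl n) g) ∨
         (∃ n₁ : N, t = tmul (SemidirectProduct.inl n₁) (SemidirectProduct.inl n₁))}

section SemidirectAux

open SemidirectProduct

variable {N H : Type*} [Group N] [Group H] (φ : H →* MulAut N)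

lemma inl_left_eq {x : N ⋊[φ] H} (hx : rightHom x = 1) : (inl x.left : N ⋊[φ] H) = x := by
  ext
  · simp
  · simp only [right_inl]
    exact hx.symm

lemma cross_mem_K₃ {n : N ⋊[φ] H} (hn : rightHom n = 1) (g : N ⋊[φ] H) :
    tmul g n * tmul n g ∈ K₃ N H φ := by
  refine Subgroup.subset_closure (Or.inl ⟨g, n.left, ?_⟩)
  rw [inl_left_eq φ hn]

lemma cross_mem_K₃' {n : N ⋊[φ] H} (hn : rightHom n = 1) (g : N ⋊[φ] H) :
    tmul n g * tmul g n ∈ K₃ N H φ := by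
  rw [← cross_comm g n]
  exact cross_mem_K₃ φ hn g

lemma diag_mem_K₃ {x : N ⋊[φ] H} (hx : rightHom x = 1) : tmul x x ∈ K₃ N H φ := by
  refine Subgroup.subset_closure (Or.inr ⟨x.left, ?_⟩)
  rw [inl_left_eq φ hx]

lemma diag_factor_mem_K₃ (x : N ⋊[φ] H) :
    tmul x x * (tmul (inr (rightHom x) : N ⋊[φ] H) (inr (rightHom x)))⁻¹ ∈ K₃ N H φ := by
  set g : N ⋊[φ] H := inr (rightHom x) with hg
  have hd := diag_mul g (g⁻¹ * x)
  rw [show g * (g⁻¹ * x) = x by group] at hd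
  -- hd : tmul x x = tmul (x*g⁻¹) g * tmul g (x*g⁻¹) * tmul (g*(x*g⁻¹)*g⁻¹) _ * tmul g g
  have hn1 : rightHom (x * g⁻¹ : N ⋊[φ] H) = 1 := by
    simp [hg]
  have hn2 : rightHom (g * (x * g⁻¹) * g⁻¹ : N ⋊[φ] H) = 1 := by
    simp [hg]
  rw [hd, mul_inv_cancel_right]
  exact mul_mem (cross_mem_K₃' φ hn1 g) (diag_mem_K₃ φ hn2)

lemma PS_id (t : TS H) :
    tmap (rightHom : N ⋊[φ] H →* H) (tmap (inr : H →* N ⋊[φ] H) t) = t := by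
  have h : (tmap (rightHom : N ⋊[φ] H →* H)).comp (tmap (inr : H →* N ⋊[φ] H)) =
      MonoidHom.id (TS H) := by
    ext x
    show tmap (rightHom : N ⋊[φ] H →* H) (tmap (inr : H →* N ⋊[φ] H) (tmul x.1 x.2)) =
      tmul x.1 x.2
    rw [tmap_tmul, tmap_tmul, rightHom_inr, rightHom_inr]
  exact DFunLike.congr_fun h t

lemma nabla_map_mem {t : TS (N ⋊[φ] H)} (ht : t ∈ nabla (N ⋊[φ] H)) :
    tmap (rightHom : N ⋊[φ] H →* H) t ∈ nabla H := by
  have hle : nabla (N ⋊[φ] H) ≤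
      Subgroup.comap (tmap (rightHom : N ⋊[φ] H →* H)) (nabla H) := by
    apply Subgroup.normalClosure_le_normal
    rintro _ ⟨x, rfl⟩
    refine Subgroup.mem_comap.2 ?_
    rw [tmap_tmul]
    exact diag_mem_nabla _
  exact hle ht

lemma inr_map_mem {t : TS H} (ht : t ∈ nabla H) :
    tmap (inr : H →* N ⋊[φ] H) t ∈ nabla (N ⋊[φ] H) := by
  have hle : nabla H ≤
      Subgroup.comap (tmap (inr : H →* N ⋊[φ] H)) (nabla (N ⋊[φ] H)) := by
    apply Subgroup.normalClosure_le_normal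
    rintro _ ⟨x, rfl⟩
    refine Subgroup.mem_comap.2 ?_
    rw [tmap_tmul]
    exact diag_mem_nabla _
  exact hle ht

lemma K₃_le_ker : K₃ N H φ ≤ (tmap (rightHom : N ⋊[φ] H →* H)).ker := by
  refine (Subgroup.closure_le _).2 ?_
  rintro _ (⟨g, n, rfl⟩ | ⟨n, rfl⟩) <;>
    simp [MonoidHom.mem_ker, tmap_tmul, rightHom_inl, tmul_one', one_tmul']

lemma K₃_le_nabla : K₃ N H φ ≤ nabla (N ⋊[φ] H) := by
  refine (Subgroup.closure_le _).2 ?_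
  rintro _ (⟨g, n, rfl⟩ | ⟨n, rfl⟩)
  · exact cross_mem_nabla g (inl n)
  · exact diag_mem_nabla (inl n)

lemma mul_decomp_eq {a b : TS (N ⋊[φ] H)}
    (haS : tmap (inr : H →* N ⋊[φ] H) (tmap (rightHom : N ⋊[φ] H →* H) a)
      ∈ nabla (N ⋊[φ] H)) :
    (a * b) * (tmap (inr : H →* N ⋊[φ] H) (tmap (rightHom : N ⋊[φ] H →* H) (a * b)))⁻¹ =
      (a * (tmap (inr : H →* N ⋊[φ] H) (tmap (rightHom : N ⋊[φ] H →* H) a))⁻¹) *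
      (b * (tmap (inr : H →* N ⋊[φ] H) (tmap (rightHom : N ⋊[φ] H →* H) b))⁻¹) := by
  set sa := tmap (inr : H →* N ⋊[φ] H) (tmap (rightHom : N ⋊[φ] H →* H) a) with hsa
  set sb := tmap (inr : H →* N ⋊[φ] H) (tmap (rightHom : N ⋊[φ] H →* H) b) with hsb
  have hab : tmap (inr : H →* N ⋊[φ] H) (tmap (rightHom : N ⋊[φ] H →* H) (a * b)) =
      sa * sb := by rw [map_mul, map_mul]
  rw [hab, mul_inv_rev]
  have c1 := nabla_commute (inv_mem haS) b
  have c2 := nabla_commute (inv_mem haS) sb⁻¹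
  calc a * b * (sb⁻¹ * sa⁻¹) = a * b * (sa⁻¹ * sb⁻¹) := by rw [← c2]
    _ = a * (b * sa⁻¹) * sb⁻¹ := by simp only [mul_assoc]
    _ = a * (sa⁻¹ * b) * sb⁻¹ := by rw [c1]
    _ = (a * sa⁻¹) * (b * sb⁻¹) := by simp only [mul_assoc]

lemma nabla_decomp {t : TS (N ⋊[φ] H)} (ht : t ∈ nabla (N ⋊[φ] H)) :
    t * (tmap (inr : H →* N ⋊[φ] H) (tmap (rightHom : N ⋊[φ] H →* H) t))⁻¹ ∈ K₃ N H φ := by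
  rw [nabla_eq_closure] at ht
  induction ht using Subgroup.closure_induction with
  | mem x hx =>
      obtain ⟨y, rfl⟩ := hx
      rw [tmap_tmul, tmap_tmul]
      exact diag_factor_mem_K₃ φ y
  | one => simpa using one_mem _
  | mul a b ha hb iha ihb =>
      have haN : a ∈ nabla (N ⋊[φ] H) := by rw [nabla_eq_closure]; exact ha
      have haS := inr_map_mem φ (nabla_map_mem φ haN)
      rw [mul_decomp_eq φ haS]
      exact mul_mem iha ihb
  | inv a ha iha =>
      have haN : a ∈ nabla (N ⋊[φ] H) := by rw [nabla_eq_closure]; exact ha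
      have haS := inr_map_mem φ (nabla_map_mem φ haN)
      rw [map_inv, map_inv]
      have : a⁻¹ * (tmap (inr : H →* N ⋊[φ] H)
            (tmap (rightHom : N ⋊[φ] H →* H) a))⁻¹⁻¹ =
          (a * (tmap (inr : H →* N ⋊[φ] H)
            (tmap (rightHom : N ⋊[φ] H →* H) a))⁻¹)⁻¹ := by
        rw [mul_inv_rev, inv_inv]
        exact (nabla_commute haS a⁻¹).symm
      rw [this]
      exact inv_mem iha

end SemidirectAux

/-- for `G = N ⋊ H`, the sequence `1 → K₃ → ∇(G) → ∇(H) → 1` induced by the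
projection `p : G → H` is exact, splits via the map induced by the inclusion `H → G`, and
`∇(G) ≅ K₃ × ∇(H)`. -/
theorem nabla_of_semidirect_product
    (N H : Type*) [Group N] [Group H] (φ : H →* MulAut N) :
    K₃ N H φ ≤ nabla (N ⋊[φ] H) ∧
    Subgroup.map (tmap (SemidirectProduct.rightHom : N ⋊[φ] H →* H)) (nabla (N ⋊[φ] H)) =
      nabla H ∧
    nabla (N ⋊[φ] H) ⊓
        MonoidHom.ker (tmap (SemidirectProduct.rightHom : N ⋊[φ] H →* H)) = K₃ N H φ ∧
    Subgroup.map (tmap (SemidirectProduct.inr : H →* N ⋊[φ] H)) (nabla H) ≤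
      nabla (N ⋊[φ] H) ∧
    (∀ t : TS H,
      tmap (SemidirectProduct.rightHom : N ⋊[φ] H →* H)
        (tmap (SemidirectProduct.inr : H →* N ⋊[φ] H) t) = t) ∧
    Nonempty (↥(nabla (N ⋊[φ] H)) ≃* ↥(K₃ N H φ) × ↥(nabla H)) := by
  have h1 : K₃ N H φ ≤ nabla (N ⋊[φ] H) := K₃_le_nabla φ
  have h5 : ∀ t : TS H,
      tmap (SemidirectProduct.rightHom : N ⋊[φ] H →* H)
        (tmap (SemidirectProduct.inr : H →* N ⋊[φ] H) t) = t := PS_id φ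
  have hsurj : Function.Surjective (tmap (SemidirectProduct.rightHom : N ⋊[φ] H →* H)) :=
    fun t => ⟨tmap SemidirectProduct.inr t, h5 t⟩
  have h2 : Subgroup.map (tmap (SemidirectProduct.rightHom : N ⋊[φ] H →* H))
      (nabla (N ⋊[φ] H)) = nabla H := by
    rw [nabla, nabla, Subgroup.map_normalClosure _ _ hsurj]
    congr 1
    ext t
    constructor
    · rintro ⟨_, ⟨x, rfl⟩, rfl⟩
      exact ⟨SemidirectProduct.rightHom x, by rw [tmap_tmul]⟩
    · rintro ⟨h, rfl⟩
      exact ⟨tmul (SemidirectProduct.inr h) (SemidirectProduct.inr h),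
        ⟨SemidirectProduct.inr h, rfl⟩,
        by rw [tmap_tmul, SemidirectProduct.rightHom_inr]⟩
  have h3 : nabla (N ⋊[φ] H) ⊓
      MonoidHom.ker (tmap (SemidirectProduct.rightHom : N ⋊[φ] H →* H)) = K₃ N H φ := by
    refine le_antisymm ?_ (le_inf h1 (K₃_le_ker φ))
    rintro t ⟨htn, htk⟩
    have hd := nabla_decomp φ htn
    rw [MonoidHom.mem_ker.mp htk] at hd
    simpa using hd
  have h4 : Subgroup.map (tmap (SemidirectProduct.inr : H →* N ⋊[φ] H)) (nabla H) ≤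
      nabla (N ⋊[φ] H) := by
    rintro _ ⟨t, ht, rfl⟩
    exact inr_map_mem φ ht
  refine ⟨h1, h2, h3, h4, h5, ⟨?_⟩⟩
  refine
    { toFun := fun t =>
        (⟨(t : TS (N ⋊[φ] H)) *
            (tmap (SemidirectProduct.inr : H →* N ⋊[φ] H)
              (tmap (SemidirectProduct.rightHom : N ⋊[φ] H →* H) (t : TS (N ⋊[φ] H))))⁻¹,
          nabla_decomp φ t.2⟩,
         ⟨tmap (SemidirectProduct.rightHom : N ⋊[φ] H →* H) (t : TS (N ⋊[φ] H)),
          nabla_map_mem φ t.2⟩),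
      invFun := fun q =>
        ⟨(q.1 : TS (N ⋊[φ] H)) * tmap (SemidirectProduct.inr : H →* N ⋊[φ] H) (q.2 : TS H),
          mul_mem (h1 q.1.2) (inr_map_mem φ q.2.2)⟩,
      left_inv := ?_, right_inv := ?_, map_mul' := ?_ }
  · intro t
    apply Subtype.ext
    simp only [inv_mul_cancel_right]
  · rintro ⟨k, u⟩
    have hk1 : tmap (SemidirectProduct.rightHom : N ⋊[φ] H →* H) (k : TS (N ⋊[φ] H)) = 1 :=
      MonoidHom.mem_ker.mp (K₃_le_ker φ k.2)
    have hq : tmap (SemidirectProduct.rightHom : N ⋊[φ] H →* H)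
        ((k : TS (N ⋊[φ] H)) * tmap (SemidirectProduct.inr : H →* N ⋊[φ] H) (u : TS H)) =
        (u : TS H) := by
      rw [map_mul, hk1, one_mul, h5]
    refine Prod.ext (Subtype.ext ?_) (Subtype.ext ?_)
    · show (k : TS (N ⋊[φ] H)) * tmap (SemidirectProduct.inr : H →* N ⋊[φ] H) (u : TS H) *
        (tmap (SemidirectProduct.inr : H →* N ⋊[φ] H)
          (tmap (SemidirectProduct.rightHom : N ⋊[φ] H →* H)
            ((k : TS (N ⋊[φ] H)) *
              tmap (SemidirectProduct.inr : H →* N ⋊[φ] H) (u : TS H))))⁻¹ = k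
      rw [hq, mul_inv_cancel_right]
    · exact hq
  · intro t t'
    have haS := inr_map_mem φ (nabla_map_mem φ t.2)
    refine Prod.ext (Subtype.ext ?_) (Subtype.ext ?_)
    · exact mul_decomp_eq φ haS
    · exact map_mul _ _ _
end

section
/- Let G be a group and N a perfect normal subgroup of G (i.e. N = [N,N]) which has a complement in G. Let j : N ⊗ N → G ⊗ G be the homomorphism induced by the inclusion N → G. Then the sequence 1 → j(N ⊗ N) → G ⊗ G → (G/N) ⊗ (G/N) → 1, where the right-hand map is induced by the quotient map G → G/N, is exact and splits on the right; consequently G ⊗ G ≅ j(N ⊗ N) ⋊ ((G/N) ⊗ (G/N)). -/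
/-! ### Auxiliary development for Statement 7 -/

namespace NATensor

variable {G : Type*} [Group G]

/-- The conjugation action of `G` on `G ⊗ G`. -/
def act (k : G) : TS G →* TS G := tmap (MulAut.conj k).toMonoidHom

@[simp] lemma act_tmul (k g h : G) :
    act k (tmul g h) = tmul (k * g * k⁻¹) (k * h * k⁻¹) := by
  simp [act, tmap_tmul, MulAut.conj_apply]

lemma act_act (k l : G) (t : TS G) : act k (act l t) = act (k * l) t := by
  have h0 : (act k).comp (act l) = act (k * l) := by
    ext ⟨g, h⟩
    show act k (act l (tmul g h)) = act (k * l) (tmul g h)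
    simp only [act_tmul]
    congr 1 <;> group
  exact DFunLike.congr_fun h0 t

lemma act_one (t : TS G) : act (1 : G) t = t := by
  have h0 : act (1 : G) = MonoidHom.id (TS G) := by
    ext ⟨g, h⟩
    show act (1 : G) (tmul g h) = tmul g h
    simp only [act_tmul]
    congr 1 <;> group
  rw [h0]; rfl

lemma tmul_mul_left (g g' h : G) :
    tmul (g * g') h = act g (tmul g' h) * tmul g h := by
  rw [tmul_rel₁, act_tmul]

lemma tmul_mul_right (g h h' : G) :
    tmul g (h * h') = tmul g h * act h (tmul g h') := by
  rw [tmul_rel₂, act_tmul]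

lemma tmul_inv_left (g h : G) : tmul g⁻¹ h = (act g⁻¹ (tmul g h))⁻¹ := by
  have h0 := tmul_mul_left g g⁻¹ h
  rw [mul_inv_cancel, one_tmul'] at h0
  have h1 : act g (tmul g⁻¹ h) = (tmul g h)⁻¹ :=
    eq_inv_of_mul_eq_one_left h0.symm
  have h2 := congrArg (act g⁻¹) h1
  rwa [act_act, inv_mul_cancel, act_one, map_inv] at h2

lemma tmul_inv_right (g h : G) : tmul g h⁻¹ = (act h⁻¹ (tmul g h))⁻¹ := by
  have h0 := tmul_mul_right g h h⁻¹
  rw [mul_inv_cancel, tmul_one'] at h0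
  have h1 : act h (tmul g h⁻¹) = (tmul g h)⁻¹ :=
    eq_inv_of_mul_eq_one_right h0.symm
  have h2 := congrArg (act h⁻¹) h1
  rwa [act_act, inv_mul_cancel, act_one, map_inv] at h2

lemma act_tmul_comm (u w : G) (t : TS G) :
    act (u * w) t * tmul u w = tmul u w * act (w * u) t := by
  have key : ∀ v z : G,
      act (u * w) (tmul v z) * tmul u w = tmul u w * act (w * u) (tmul v z) := by
    intro v z
    have e1 : tmul (u * v) (w * z)
        = act u (tmul v w) * (act (u * w) (tmul v z) * tmul u w) * act w (tmul u z) := by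
      rw [tmul_mul_left u v (w * z), tmul_mul_right v w z, tmul_mul_right u w z, map_mul,
        act_act]
      simp only [mul_assoc]
    have e2 : tmul (u * v) (w * z)
        = act u (tmul v w) * (tmul u w * act (w * u) (tmul v z)) * act w (tmul u z) := by
      rw [tmul_mul_right (u * v) w z, tmul_mul_left u v w, tmul_mul_left u v z, map_mul,
        act_act]
      simp only [mul_assoc]
    have e3 := e1.symm.trans e2
    exact mul_left_cancel (mul_right_cancel e3)
  have hhom : ((MulAut.conj (tmul u w)).symm.toMonoidHom).comp (act (u * w)) = act (w * u) := by
    ext ⟨v, z⟩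
    show (MulAut.conj (tmul u w)).symm (act (u * w) (tmul v z)) = act (w * u) (tmul v z)
    rw [MulAut.conj_symm_apply, mul_assoc, inv_mul_eq_iff_eq_mul]
    exact key v z
  have h0 := DFunLike.congr_fun hhom t
  simp only [MonoidHom.comp_apply, MulEquiv.coe_toMonoidHom, MulAut.conj_symm_apply] at h0
  rw [← h0]; group

lemma tmul_conj (u w : G) (t : TS G) :
    tmul u w * t * (tmul u w)⁻¹ = act (u * w * u⁻¹ * w⁻¹) t := by
  have h0 := act_tmul_comm u w (act (u⁻¹ * w⁻¹) t)
  rw [act_act, act_act] at h0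
  have e : w * u * (u⁻¹ * w⁻¹) = 1 := by group
  rw [e, act_one] at h0
  have e2 : u * w * (u⁻¹ * w⁻¹) = u * w * u⁻¹ * w⁻¹ := by group
  rw [e2] at h0
  rw [← h0]; group

lemma tmul_conj_left (x g h : G) :
    tmul x (g * h * g⁻¹) * tmul g h = act x (tmul g h) * tmul x h := by
  have h1 := tmul_mul_left g (g⁻¹ * x * g) h
  rw [act_tmul] at h1
  have e1 : g * (g⁻¹ * x * g) = x * g := by group
  rw [e1] at h1
  have e2 : x * g * g⁻¹ = x := by group
  rw [e2] at h1
  rw [← h1, tmul_mul_left x g h]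

lemma tmul_commutator_right (x g h : G) :
    tmul x (g * h * g⁻¹ * h⁻¹) = act x (tmul g h) * (tmul g h)⁻¹ := by
  have s1 := tmul_mul_right x (g * h * g⁻¹) h⁻¹
  rw [tmul_inv_right x h, map_inv, act_act, ← tmul_conj g h (tmul x h)] at s1
  have s6 : tmul x (g * h * g⁻¹) = act x (tmul g h) * tmul x h * (tmul g h)⁻¹ := by
    rw [← tmul_conj_left x g h]; group
  rw [s1, s6]; group

/-- The swap anti-automorphism `g ⊗ h ↦ (h ⊗ g)⁻¹` of `G ⊗ G`. -/
def flip : TS G →* TS G :=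
  PresentedGroup.toGroup (f := fun x : G × G => (tmul x.2 x.1)⁻¹) (by
    rintro r (⟨g, g', h, rfl⟩ | ⟨g, h, h', rfl⟩) <;>
      simp only [map_mul, map_inv, FreeGroup.lift_apply_of]
    · rw [mul_inv_eq_one, ← mul_inv_rev, inv_inj]
      exact tmul_rel₂ h g g'
    · rw [mul_inv_eq_one, ← mul_inv_rev, inv_inj]
      exact tmul_rel₁ h h' g)

@[simp] lemma flip_tmul (g h : G) : flip (tmul g h) = (tmul h g)⁻¹ :=
  PresentedGroup.toGroup.of _

section Subgroup

variable (N : Subgroup G)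

lemma mem_range_tmul (n m : N) :
    tmul (n : G) (m : G) ∈ (tmap N.subtype).range :=
  ⟨tmul n m, by simp [tmap_tmul]⟩

variable [N.Normal]

lemma act_mem_range (k : G) {t : TS G} (ht : t ∈ (tmap N.subtype).range) :
    act k t ∈ (tmap N.subtype).range := by
  obtain ⟨s, rfl⟩ := ht
  refine ⟨tmap (MulAut.conjNormal k).toMonoidHom s, ?_⟩
  have h0 : (tmap N.subtype).comp (tmap (MulAut.conjNormal k).toMonoidHom)
      = (act k).comp (tmap N.subtype) := by
    ext ⟨n, m⟩
    show tmap N.subtype (tmap (MulAut.conjNormal k).toMonoidHom (tmul n m))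
        = act k (tmap N.subtype (tmul n m))
    simp [tmap_tmul, MulAut.conjNormal_apply]
  exact DFunLike.congr_fun h0 s

lemma flip_mem_range {t : TS G} (ht : t ∈ (tmap N.subtype).range) :
    flip t ∈ (tmap N.subtype).range := by
  obtain ⟨s, rfl⟩ := ht
  refine ⟨flip s, ?_⟩
  have h0 : (tmap N.subtype).comp (flip (G := ↥N)) = flip.comp (tmap N.subtype) := by
    ext ⟨n, m⟩
    show tmap N.subtype (flip (tmul n m)) = flip (tmap N.subtype (tmul n m))
    simp [tmap_tmul]
  exact DFunLike.congr_fun h0 s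

lemma commutator_tmul_mem (g : G) (a b : N) :
    tmul g ((a : G) * b * (a : G)⁻¹ * (b : G)⁻¹) ∈ (tmap N.subtype).range := by
  rw [tmul_commutator_right]
  exact mul_mem (act_mem_range N g (mem_range_tmul N a b)) (inv_mem (mem_range_tmul N a b))

open scoped commutatorElement in
lemma tmul_mem_range_right (hperf : commutator ↥N = ⊤) (g : G) (n : N) :
    tmul g (n : G) ∈ (tmap N.subtype).range := by
  have hn : n ∈ Subgroup.closure (commutatorSet ↥N) := by
    rw [← commutator_eq_closure, hperf]; trivial
  have main : ∀ (g : G) (k : ↥N),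
      tmul g ((((k * n * k⁻¹ : ↥N)) : G)) ∈ (tmap N.subtype).range := by
    refine Subgroup.closure_induction
      (p := fun a _ => ∀ (g : G) (k : ↥N),
        tmul g (((k * a * k⁻¹ : ↥N) : G)) ∈ (tmap N.subtype).range)
      ?_ ?_ ?_ ?_ hn
    · rintro x ⟨a, b, rfl⟩ g k
      have e : (((k * ⁅a, b⁆ * k⁻¹ : ↥N)) : G)
          = ((k * a * k⁻¹ : ↥N) : G) * ((k * b * k⁻¹ : ↥N) : G)
            * (((k * a * k⁻¹ : ↥N)) : G)⁻¹ * (((k * b * k⁻¹ : ↥N)) : G)⁻¹ := by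
        push_cast [commutatorElement_def]
        group
      rw [e]
      exact commutator_tmul_mem N g (k * a * k⁻¹) (k * b * k⁻¹)
    · intro g k
      have e : (k * 1 * k⁻¹ : ↥N) = 1 := by group
      rw [e, OneMemClass.coe_one, tmul_one']
      exact one_mem _
    · intro x y hx hy px py g k
      have e : (((k * (x * y) * k⁻¹ : ↥N)) : G)
          = ((k * x * k⁻¹ : ↥N) : G) * ((k * y * k⁻¹ : ↥N) : G) := by
        push_cast; group
      rw [e, tmul_mul_right, act_tmul]
      refine mul_mem (px g k) ?_
      have e2 : ((k * x * k⁻¹ : ↥N) : G) * ((k * y * k⁻¹ : ↥N) : G)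
            * (((k * x * k⁻¹ : ↥N)) : G)⁻¹ = ((((k * x) * y * (k * x)⁻¹ : ↥N)) : G) := by
        push_cast; group
      rw [e2]
      exact py _ (k * x)
    · intro x hx px g k
      have e : (((k * x⁻¹ * k⁻¹ : ↥N)) : G) = (((k * x * k⁻¹ : ↥N)) : G)⁻¹ := by
        push_cast; group
      rw [e, tmul_inv_right, act_tmul]
      refine inv_mem ?_
      have e2 : (((k * x * k⁻¹ : ↥N)) : G)⁻¹ * ((k * x * k⁻¹ : ↥N) : G)
          * ((((k * x * k⁻¹ : ↥N)) : G)⁻¹)⁻¹ = ((k * x * k⁻¹ : ↥N) : G) := by group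
      rw [e2]
      exact px _ k
  have h0 := main g 1
  simpa using h0

lemma tmul_mem_range_left (hperf : commutator ↥N = ⊤) (n : N) (g : G) :
    tmul (n : G) g ∈ (tmap N.subtype).range := by
  have h2 := flip_mem_range N (tmul_mem_range_right N hperf g n)
  rw [flip_tmul] at h2
  exact inv_mem_iff.mp h2

lemma range_tmap_subtype_normal : ((tmap N.subtype).range).Normal := by
  constructor
  intro t ht x
  let H : Subgroup (TS G) :=
    { carrier := {x | ∀ t ∈ (tmap N.subtype).range,
        x * t * x⁻¹ ∈ (tmap N.subtype).range ∧ x⁻¹ * t * x ∈ (tmap N.subtype).range}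
      one_mem' := by
        intro t ht
        refine ⟨?_, ?_⟩ <;> simpa using ht
      mul_mem' := by
        intro a b ha hb t ht
        constructor
        · have e : a * b * t * (a * b)⁻¹ = a * (b * t * b⁻¹) * a⁻¹ := by group
          rw [e]; exact (ha _ (hb t ht).1).1
        · have e : (a * b)⁻¹ * t * (a * b) = b⁻¹ * (a⁻¹ * t * a) * b := by group
          rw [e]; exact (hb _ (ha t ht).2).2
      inv_mem' := by
        intro a ha t ht
        constructor
        · rw [inv_inv]; exact (ha t ht).2
        · rw [inv_inv]; exact (ha t ht).1 }
  have hx : x ∈ H := by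
    refine PresentedGroup.generated_by _ H ?_ x
    rintro ⟨g, h⟩ t ht
    constructor
    · show tmul g h * t * (tmul g h)⁻¹ ∈ _
      rw [tmul_conj]
      exact act_mem_range N _ ht
    · show (tmul g h)⁻¹ * t * tmul g h ∈ _
      have hc := tmul_conj g h (act ((g * h * g⁻¹ * h⁻¹)⁻¹) t)
      rw [act_act] at hc
      have e : g * h * g⁻¹ * h⁻¹ * (g * h * g⁻¹ * h⁻¹)⁻¹ = 1 := by group
      rw [e, act_one] at hc
      have e2 : act ((g * h * g⁻¹ * h⁻¹)⁻¹) t = (tmul g h)⁻¹ * t * tmul g h := by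
        conv_rhs => rw [← hc]
        group
      rw [← e2]
      exact act_mem_range N _ ht
  exact (hx t ht).1

lemma range_le_ker :
    (tmap N.subtype).range ≤ (tmap (QuotientGroup.mk' N)).ker := by
  have h0 : (tmap (QuotientGroup.mk' N)).comp (tmap N.subtype) = 1 := by
    ext ⟨n, m⟩
    show tmap (QuotientGroup.mk' N) (tmap N.subtype (tmul n m)) = 1
    rw [tmap_tmul, tmap_tmul]
    have h1 : QuotientGroup.mk' N (N.subtype n) = 1 :=
      (QuotientGroup.eq_one_iff _).mpr n.2
    have h2 : QuotientGroup.mk' N (N.subtype m) = 1 :=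
      (QuotientGroup.eq_one_iff _).mpr m.2
    rw [h1, h2, one_tmul']
  rintro t ⟨s, rfl⟩
  have := DFunLike.congr_fun h0 s
  simpa [MonoidHom.mem_ker] using this

lemma ker_le_range (hperf : commutator ↥N = ⊤) :
    (tmap (QuotientGroup.mk' N)).ker ≤ (tmap N.subtype).range := by
  classical
  obtain ⟨sec, hsec⟩ : ∃ sec : G ⧸ N → G, ∀ q, QuotientGroup.mk' N (sec q) = q :=
    ⟨Function.surjInv (QuotientGroup.mk'_surjective N),
      fun q => Function.surjInv_eq _ q⟩
  set SL : Set (TS G) := {t | ∃ (g : G) (n : N), t = tmul (n : G) g ∨ t = tmul g (n : G)}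
    with hSL
  set L := Subgroup.normalClosure SL with hLdef
  haveI : L.Normal := Subgroup.normalClosure_normal
  have hmem : ∀ {x : TS G}, x ∈ SL → QuotientGroup.mk' L x = 1 := by
    intro x hx
    rw [QuotientGroup.mk'_apply, QuotientGroup.eq_one_iff]
    exact Subgroup.subset_normalClosure hx
  have W : ∀ g g' h h' : G, QuotientGroup.mk' N g = QuotientGroup.mk' N g' →
      QuotientGroup.mk' N h = QuotientGroup.mk' N h' →
      QuotientGroup.mk' L (tmul g h) = QuotientGroup.mk' L (tmul g' h') := by
    intro g g' h h' hg hh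
    obtain ⟨n, hn, rfl⟩ := (QuotientGroup.mk'_eq_mk' (N := N)).mp hg
    obtain ⟨m, hm, rfl⟩ := (QuotientGroup.mk'_eq_mk' (N := N)).mp hh
    have e1 : tmul (g * n) (h * m)
        = act g (tmul n h) * tmul g h * act h (tmul (g * n) m) := by
      rw [tmul_mul_right (g * n) h m, tmul_mul_left g n h]
    have m1 : QuotientGroup.mk' L (act g (tmul n h)) = 1 := by
      rw [act_tmul]
      refine hmem ⟨g * h * g⁻¹, ⟨g * n * g⁻¹, Subgroup.Normal.conj_mem ‹N.Normal› n hn g⟩,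
        Or.inl rfl⟩
    have m2 : QuotientGroup.mk' L (act h (tmul (g * n) m)) = 1 := by
      rw [act_tmul]
      refine hmem ⟨h * (g * n) * h⁻¹, ⟨h * m * h⁻¹, Subgroup.Normal.conj_mem ‹N.Normal› m hm h⟩,
        Or.inr rfl⟩
    rw [e1, map_mul, map_mul, m1, m2, one_mul, mul_one]
  have hrels : ∀ r ∈ rels (G ⧸ N),
      FreeGroup.lift (fun x : (G ⧸ N) × (G ⧸ N) =>
        QuotientGroup.mk' L (tmul (sec x.1) (sec x.2))) r = 1 := by
    rintro r (⟨q, q', p, rfl⟩ | ⟨q, p, p', rfl⟩) <;>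
      simp only [map_mul, map_inv, FreeGroup.lift_apply_of, mul_inv_eq_one]
    · have e1 : QuotientGroup.mk' L (tmul (sec (q * q')) (sec p))
          = QuotientGroup.mk' L (tmul (sec q * sec q') (sec p)) :=
        W _ _ _ _ (by rw [hsec, map_mul, hsec, hsec]) rfl
      rw [e1, tmul_rel₁ (sec q) (sec q') (sec p), map_mul]
      have e2 : QuotientGroup.mk' L
            (tmul (sec q * sec q' * (sec q)⁻¹) (sec q * sec p * (sec q)⁻¹))
          = QuotientGroup.mk' L (tmul (sec (q * q' * q⁻¹)) (sec (q * p * q⁻¹))) :=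
        W _ _ _ _ (by simp only [map_mul, map_inv, hsec]) (by simp only [map_mul, map_inv, hsec])
      rw [e2]
    · have e1 : QuotientGroup.mk' L (tmul (sec q) (sec (p * p')))
          = QuotientGroup.mk' L (tmul (sec q) (sec p * sec p')) :=
        W _ _ _ _ rfl (by rw [hsec, map_mul, hsec, hsec])
      rw [e1, tmul_rel₂ (sec q) (sec p) (sec p'), map_mul]
      have e2 : QuotientGroup.mk' L
            (tmul (sec p * sec q * (sec p)⁻¹) (sec p * sec p' * (sec p)⁻¹))
          = QuotientGroup.mk' L (tmul (sec (p * q * p⁻¹)) (sec (p * p' * p⁻¹))) :=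
        W _ _ _ _ (by simp only [map_mul, map_inv, hsec]) (by simp only [map_mul, map_inv, hsec])
      rw [e2]
  set φ : TS (G ⧸ N) →* TS G ⧸ L := PresentedGroup.toGroup hrels with hφdef
  have hφ : ∀ a b : G ⧸ N, φ (tmul a b) = QuotientGroup.mk' L (tmul (sec a) (sec b)) :=
    fun a b => PresentedGroup.toGroup.of _
  have key : φ.comp (tmap (QuotientGroup.mk' N)) = QuotientGroup.mk' L := by
    ext ⟨g, h⟩
    show φ (tmap (QuotientGroup.mk' N) (tmul g h)) = QuotientGroup.mk' L (tmul g h)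
    rw [tmap_tmul, hφ]
    exact W _ _ _ _ (hsec _) (hsec _)
  have hkerL : (tmap (QuotientGroup.mk' N)).ker ≤ L := by
    intro t ht
    have h1 : QuotientGroup.mk' L t = 1 := by
      rw [← DFunLike.congr_fun key t]
      simp only [MonoidHom.comp_apply, MonoidHom.mem_ker.mp ht, map_one]
    rwa [QuotientGroup.mk'_apply, QuotientGroup.eq_one_iff] at h1
  haveI : ((tmap N.subtype).range).Normal := range_tmap_subtype_normal N
  have hLR : L ≤ (tmap N.subtype).range := by
    refine Subgroup.normalClosure_le_normal ?_
    rintro t ⟨g, n, (rfl | rfl)⟩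
    · exact tmul_mem_range_left N hperf n g
    · exact tmul_mem_range_right N hperf g n
  exact fun t ht => hLR (hkerL ht)

lemma theta_surjective : Function.Surjective (tmap (QuotientGroup.mk' N)) := by
  have h0 : ∀ x : TS (G ⧸ N), x ∈ (tmap (QuotientGroup.mk' N)).range := by
    intro x
    refine PresentedGroup.generated_by _ _ ?_ x
    rintro ⟨q, q'⟩
    obtain ⟨g, hg⟩ := QuotientGroup.mk'_surjective N q
    obtain ⟨h, hh⟩ := QuotientGroup.mk'_surjective N q'
    exact ⟨tmul g h, by rw [tmap_tmul, hg, hh]; rfl⟩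
  intro y
  obtain ⟨x, hx⟩ := h0 y
  exact ⟨x, hx⟩

end Subgroup

open scoped Pointwise in
lemma exists_splitting (N B : Subgroup G) [N.Normal] (hB1 : N ⊔ B = ⊤) (hB2 : N ⊓ B = ⊥) :
    ∃ ρ : G ⧸ N →* G, (QuotientGroup.mk' N).comp ρ = MonoidHom.id (G ⧸ N) := by
  set β := (QuotientGroup.mk' N).comp B.subtype with hβ
  have hinj : Function.Injective β := by
    rw [← MonoidHom.ker_eq_bot_iff, eq_bot_iff]
    intro b hb
    have h1 : (b : G) ∈ N := by
      have h2 := MonoidHom.mem_ker.mp hb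
      rwa [hβ, MonoidHom.comp_apply, QuotientGroup.mk'_apply, QuotientGroup.eq_one_iff] at h2
    have h2 : (b : G) ∈ N ⊓ B := ⟨h1, b.2⟩
    rw [hB2, Subgroup.mem_bot] at h2
    rw [Subgroup.mem_bot]
    exact Subtype.ext h2
  have hsurj : Function.Surjective β := by
    intro q
    obtain ⟨g, rfl⟩ := QuotientGroup.mk'_surjective N q
    have hg : g ∈ B ⊔ N := by rw [sup_comm, hB1]; trivial
    have hg' : g ∈ (B : Set G) * (N : Set G) := by
      rw [← Subgroup.mul_normal]; exact hg
    obtain ⟨b, hb, n, hn, rfl⟩ := hg'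
    refine ⟨⟨b, hb⟩, ?_⟩
    show QuotientGroup.mk' N b = QuotientGroup.mk' N (b * n)
    have h3 : QuotientGroup.mk' N n = 1 := (QuotientGroup.eq_one_iff n).mpr hn
    rw [map_mul, h3, mul_one]
  let e := MulEquiv.ofBijective β ⟨hinj, hsurj⟩
  refine ⟨B.subtype.comp e.symm.toMonoidHom, ?_⟩
  refine MonoidHom.ext fun q => ?_
  show QuotientGroup.mk' N (B.subtype (e.symm q)) = q
  exact e.apply_symm_apply q


end NATensor

open NATensor in
/-- if `N` is a perfect normal subgroup of `G` with a complement, then the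
sequence `1 → j(N ⊗ N) → G ⊗ G → (G/N) ⊗ (G/N) → 1` is exact and splits on the right;
consequently `G ⊗ G ≅ j(N ⊗ N) ⋊ ((G/N) ⊗ (G/N))`. -/
theorem tensor_square_of_perfect_normal_complemented (G : Type*) [Group G]
    (N : Subgroup G) [N.Normal] (hperf : commutator ↥N = ⊤)
    (B : Subgroup G) (hB1 : N ⊔ B = ⊤) (hB2 : N ⊓ B = ⊥) :
    Function.Surjective (tmap (QuotientGroup.mk' N)) ∧
    MonoidHom.ker (tmap (QuotientGroup.mk' N)) = MonoidHom.range (tmap N.subtype) ∧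
    (∃ s : TS (G ⧸ N) →* TS G,
      (tmap (QuotientGroup.mk' N)).comp s = MonoidHom.id (TS (G ⧸ N))) ∧
    ∃ ψ : TS (G ⧸ N) →* MulAut ↥(MonoidHom.range (tmap N.subtype)),
      Nonempty (TS G ≃* ↥(MonoidHom.range (tmap N.subtype)) ⋊[ψ] TS (G ⧸ N)) := by
  have hker : MonoidHom.ker (tmap (QuotientGroup.mk' N)) = MonoidHom.range (tmap N.subtype) :=
    le_antisymm (ker_le_range N hperf) (range_le_ker N)
  obtain ⟨ρ, hρ⟩ := exists_splitting N B hB1 hB2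
  have hs : (tmap (QuotientGroup.mk' N)).comp (tmap ρ) = MonoidHom.id (TS (G ⧸ N)) := by
    ext ⟨q, q'⟩
    show tmap (QuotientGroup.mk' N) (tmap ρ (tmul q q')) = tmul q q'
    have e1 : QuotientGroup.mk' N (ρ q) = q := DFunLike.congr_fun hρ q
    have e2 : QuotientGroup.mk' N (ρ q') = q' := DFunLike.congr_fun hρ q'
    rw [tmap_tmul, tmap_tmul, e1, e2]
  refine ⟨theta_surjective N, hker, ⟨tmap ρ, hs⟩, ?_⟩
  rw [← hker]
  set θ := tmap (QuotientGroup.mk' N) with hθdef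
  set s := tmap ρ with hsdef
  have hθs : ∀ q, θ (s q) = q := fun q => DFunLike.congr_fun hs q
  refine ⟨MulAut.conjNormal.comp s, ⟨?_⟩⟩
  have hcompat : ∀ q : TS (G ⧸ N),
      (θ.ker.subtype).comp ((MulAut.conjNormal.comp s) q).toMonoidHom
        = (MulAut.conj (s q)).toMonoidHom.comp θ.ker.subtype := by
    intro q
    refine MonoidHom.ext fun k => ?_
    show ((MulAut.conjNormal (s q) k : θ.ker) : TS G) = MulAut.conj (s q) (k : TS G)
    rw [MulAut.conjNormal_apply, MulAut.conj_apply]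
  let Φ := SemidirectProduct.lift θ.ker.subtype s hcompat
  have hΦ : ∀ a, Φ a = (a.left : TS G) * s a.right := by
    intro a
    conv_lhs => rw [← SemidirectProduct.inl_left_mul_inr_right a]
    rw [map_mul, SemidirectProduct.lift_inl, SemidirectProduct.lift_inr]
    rfl
  have hbij : Function.Bijective Φ := by
    constructor
    · rw [injective_iff_map_eq_one]
      intro a ha
      rw [hΦ] at ha
      have h1 : a.right = 1 := by
        have h2 := congrArg θ ha
        rw [map_mul, map_one, MonoidHom.mem_ker.mp a.left.2, one_mul, hθs] at h2
        exact h2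
      have h2 : (a.left : TS G) = 1 := by
        rw [h1, map_one, mul_one] at ha; exact ha
      refine SemidirectProduct.ext ?_ ?_
      · exact Subtype.ext h2
      · exact h1
    · intro t
      have hmem : t * (s (θ t))⁻¹ ∈ θ.ker := by
        rw [MonoidHom.mem_ker, map_mul, map_inv, hθs, mul_inv_cancel]
      refine ⟨⟨⟨t * (s (θ t))⁻¹, hmem⟩, θ t⟩, ?_⟩
      rw [hΦ]
      show t * (s (θ t))⁻¹ * s (θ t) = t
      group
  exact (MulEquiv.ofBijective Φ hbij).symm
end
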